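/- Let G = H∗_(K,φ) with K < H, and suppose there exist a, b ∈ H with a ∈ φ(γ_b(K)) such that K^a ⊊ K ⊊ φ(γ_b(K)). Then (after replacing φ by φγ_b, assume b = 1 and a ∈ φ(K)) the map ψ : h ↦ h for h ∈ H, t ↦ t²at⁻¹φ(a)⁻¹ is an automorphism of G with inverse h ↦ h, t ↦ tφ(a)ta⁻¹t⁻¹. -/

import Mathlib

open HNNExtension

/-- The automorphism-induced HNN extension `H∗_(K,φ)`. -/
abbrev AutHNN (H : Type*) [Group H] (K : Subgroup H) (φ : H ≃* H) :=
  HNNExtension H K (K.map (φ : H →* H)) (φ.subgroupMap K)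

section Aux
variable {H : Type*} [Group H] {K : Subgroup H} {φ : H ≃* H}

lemma aux_tmul {k : H} (hk : k ∈ K) (z : AutHNN H K φ) :
    t * (of k * z) = of (φ k) * (t * z) := by
  rw [← mul_assoc, ← mul_assoc]
  congr 1
  simpa [MulEquiv.coe_subgroupMap_apply] using t_mul_of (φ := φ.subgroupMap K) ⟨k, hk⟩

lemma aux_tmul' {k : H} (hk : k ∈ K) :
    (t : AutHNN H K φ) * of k = of (φ k) * t := by
  simpa [MulEquiv.coe_subgroupMap_apply] using t_mul_of (φ := φ.subgroupMap K) ⟨k, hk⟩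

lemma aux_itmul {k : H} (hk : k ∈ K) (z : AutHNN H K φ) :
    t⁻¹ * (of (φ k) * z) = of k * (t⁻¹ * z) := by
  rw [← mul_assoc, ← mul_assoc]
  congr 1
  simpa [MulEquiv.subgroupMap_symm_apply] using
    inv_t_mul_of (φ := φ.subgroupMap K) ⟨φ k, ⟨k, hk, rfl⟩⟩

lemma aux_itmul' {k : H} (hk : k ∈ K) :
    (t : AutHNN H K φ)⁻¹ * of (φ k) = of k * t⁻¹ := by
  simpa [MulEquiv.subgroupMap_symm_apply] using
    inv_t_mul_of (φ := φ.subgroupMap K) ⟨φ k, ⟨k, hk, rfl⟩⟩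

lemma aux_of_mul (u v : H) (z : AutHNN H K φ) :
    of u * (of v * z) = of (u * v) * z := by rw [← mul_assoc, ← map_mul]

lemma aux_inv (u : H) : (of u : AutHNN H K φ)⁻¹ = of u⁻¹ := (map_inv _ _).symm

lemma aux_of_mul' (u v : H) :
    (of u : AutHNN H K φ) * of v = of (u * v) := by rw [← map_mul]

end Aux

section Words
variable {H : Type*} [Group H] {K : Subgroup H} {φ : H ≃* H} {a' : H}

lemma W1 (ha' : a' ∈ K)
    (hc : ∀ {k : H}, k ∈ K → (φ a')⁻¹ * k * φ a' ∈ K)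
    (hs : ∀ {k : H}, k ∈ K → φ.symm k ∈ K)
    {k : H} (hk : k ∈ K) :
    (t * t * of (φ a') * t⁻¹ * (of (φ (φ a')))⁻¹ : AutHNN H K φ) * of k =
      of (φ k) * (t * t * of (φ a') * t⁻¹ * (of (φ (φ a')))⁻¹) := by
  simp only [mul_assoc, aux_inv]
  rw [aux_of_mul' (φ (φ a'))⁻¹ k,
    show ((φ (φ a'))⁻¹ * k : H) = φ ((φ a')⁻¹ * φ.symm k * φ a') * (φ (φ a'))⁻¹ by
      simp only [map_mul, map_inv, MulEquiv.apply_symm_apply]; group,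
    ← aux_of_mul' (φ ((φ a')⁻¹ * φ.symm k * φ a')) (φ (φ a'))⁻¹,
    aux_itmul (hc (hs hk)),
    aux_of_mul (φ a') ((φ a')⁻¹ * φ.symm k * φ a'),
    show (φ a' * ((φ a')⁻¹ * φ.symm k * φ a') : H) = φ.symm k * φ a' by group,
    ← aux_of_mul (φ.symm k) (φ a'),
    aux_tmul (hs hk), MulEquiv.apply_symm_apply,
    aux_tmul hk]

lemma W2 (ha' : a' ∈ K)
    (hc : ∀ {k : H}, k ∈ K → (φ a')⁻¹ * k * φ a' ∈ K)
    (hs : ∀ {k : H}, k ∈ K → φ.symm k ∈ K)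
    {k : H} (hk : k ∈ K) :
    (t * of (φ (φ a')) * t * (of (φ a'))⁻¹ * t⁻¹ : AutHNN H K φ) * of k =
      of (φ k) * (t * of (φ (φ a')) * t * (of (φ a'))⁻¹ * t⁻¹) := by
  simp only [mul_assoc, aux_inv]
  rw [show (t : AutHNN H K φ)⁻¹ * of k = of (φ.symm k) * t⁻¹ by
      simpa using aux_itmul' (φ := φ) (hs hk),
    aux_of_mul (φ a')⁻¹ (φ.symm k),
    show ((φ a')⁻¹ * φ.symm k : H) = ((φ a')⁻¹ * φ.symm k * φ a') * (φ a')⁻¹ by group,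
    ← aux_of_mul ((φ a')⁻¹ * φ.symm k * φ a') (φ a')⁻¹,
    aux_tmul (hc (hs hk)),
    aux_of_mul (φ (φ a')) (φ ((φ a')⁻¹ * φ.symm k * φ a')),
    show (φ (φ a') * φ ((φ a')⁻¹ * φ.symm k * φ a') : H) = k * φ (φ a') by
      simp only [map_mul, map_inv, MulEquiv.apply_symm_apply]; group,
    ← aux_of_mul k (φ (φ a')),
    aux_tmul hk]

lemma W3 (ha' : a' ∈ K)
    (hc : ∀ {k : H}, k ∈ K → (φ a')⁻¹ * k * φ a' ∈ K) :
    ((t * of (φ (φ a')) * t * (of (φ a'))⁻¹ * t⁻¹) *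
      (t * of (φ (φ a')) * t * (of (φ a'))⁻¹ * t⁻¹) * of (φ a') *
      (t * of (φ (φ a')) * t * (of (φ a'))⁻¹ * t⁻¹)⁻¹ *
      (of (φ (φ a')))⁻¹ : AutHNN H K φ) = t := by
  simp only [mul_inv_rev, inv_inv, aux_inv, mul_assoc, inv_mul_cancel_left]
  rw [aux_itmul ha', inv_mul_cancel_left,
    aux_of_mul (φ a')⁻¹ a', aux_of_mul ((φ a')⁻¹ * a') (φ a'),
    aux_tmul (hc ha'), mul_inv_cancel_left,
    aux_of_mul (φ (φ a')) (φ ((φ a')⁻¹ * a' * φ a')),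
    aux_of_mul (φ (φ a') * φ ((φ a')⁻¹ * a' * φ a')) (φ (φ a'))⁻¹,
    show (φ (φ a') * φ ((φ a')⁻¹ * a' * φ a') * (φ (φ a'))⁻¹ : H) = φ a' by
      simp only [map_mul, map_inv]; group,
    aux_of_mul (φ a')⁻¹ (φ a')]
  simp

lemma W4 (ha' : a' ∈ K)
    (hc : ∀ {k : H}, k ∈ K → (φ a')⁻¹ * k * φ a' ∈ K) :
    ((t * t * of (φ a') * t⁻¹ * (of (φ (φ a')))⁻¹) * of (φ (φ a')) *
      (t * t * of (φ a') * t⁻¹ * (of (φ (φ a')))⁻¹) * (of (φ a'))⁻¹ *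
      (t * t * of (φ a') * t⁻¹ * (of (φ (φ a')))⁻¹)⁻¹ : AutHNN H K φ) = t := by
  simp only [mul_inv_rev, inv_inv, aux_inv, mul_assoc, inv_mul_cancel_left]
  rw [aux_of_mul (φ (φ a'))⁻¹ (φ a')⁻¹, aux_of_mul ((φ (φ a'))⁻¹ * (φ a')⁻¹) (φ (φ a')),
    show ((φ (φ a'))⁻¹ * (φ a')⁻¹ * φ (φ a') : H) = φ ((φ a')⁻¹ * a'⁻¹ * φ a') by
      simp only [map_mul, map_inv],
    aux_itmul (hc (inv_mem ha')), inv_mul_cancel_left,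
    aux_of_mul (φ a') ((φ a')⁻¹ * a'⁻¹ * φ a'),
    show (φ a' * ((φ a')⁻¹ * a'⁻¹ * φ a') : H) = a'⁻¹ * φ a' by group,
    ← aux_of_mul a'⁻¹ (φ a'),
    aux_tmul (inv_mem ha')]
  simp

end Words

/-- If `a ∈ φ(K)` with `a⁻¹Ka ⊊ K ⊊ φ(K)`, then `h ↦ h`, `t ↦ t²at⁻¹φ(a)⁻¹`
is an automorphism of `G` with inverse `h ↦ h`, `t ↦ tφ(a)ta⁻¹t⁻¹`. -/
theorem psi_is_automorphism {H : Type*} [Group H] (K : Subgroup H) (φ : H ≃* H)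
    (a : H) (ha : a ∈ K.map (φ : H →* H))
    (h1 : K.map ((MulAut.conj a⁻¹ : MulAut H) : H →* H) < K)
    (h2 : K < K.map (φ : H →* H)) :
    ∃ ψ : AutHNN H K φ ≃* AutHNN H K φ,
      (∀ h : H, ψ (of h) = of h) ∧
      ψ t = t * t * of a * t⁻¹ * (of (φ a))⁻¹ ∧
      (∀ h : H, ψ.symm (of h) = of h) ∧
      ψ.symm t = t * of (φ a) * t * (of a)⁻¹ * t⁻¹ := by
  obtain ⟨a', ha'K, rfl⟩ := ha
  have hc : ∀ {k : H}, k ∈ K → (φ a')⁻¹ * k * φ a' ∈ K := by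
    intro k hk
    refine h1.le ⟨k, hk, ?_⟩
    simp [MulAut.conj]
  have hs : ∀ {k : H}, k ∈ K → φ.symm k ∈ K := by
    intro k hk
    obtain ⟨m, hm, hmk⟩ := h2.le hk
    rw [← hmk]
    simpa using hm
  have hx : ∀ b : (K : Subgroup H),
      (t * t * of (φ a') * t⁻¹ * (of (φ (φ a')))⁻¹ : AutHNN H K φ) * of (b : H) =
        of ((φ.subgroupMap K b : K.map (φ : H →* H)) : H) *
          (t * t * of (φ a') * t⁻¹ * (of (φ (φ a')))⁻¹) := by
    rintro ⟨k, hk⟩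
    simpa [MulEquiv.coe_subgroupMap_apply] using W1 ha'K hc hs hk
  have hy : ∀ b : (K : Subgroup H),
      (t * of (φ (φ a')) * t * (of (φ a'))⁻¹ * t⁻¹ : AutHNN H K φ) * of (b : H) =
        of ((φ.subgroupMap K b : K.map (φ : H →* H)) : H) *
          (t * of (φ (φ a')) * t * (of (φ a'))⁻¹ * t⁻¹) := by
    rintro ⟨k, hk⟩
    simpa [MulEquiv.coe_subgroupMap_apply] using W2 ha'K hc hs hk
  refine ⟨MonoidHom.toMulEquiv (lift of _ hx) (lift of _ hy) ?_ ?_, ?_, ?_, ?_, ?_⟩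
  · refine hom_ext ?_ ?_
    · ext h
      simp only [MonoidHom.coe_comp, Function.comp_apply, lift_of, MonoidHom.id_apply]
    · simp only [MonoidHom.comp_apply, lift_t, MonoidHom.id_apply, map_mul, map_inv, lift_of]
      exact W3 ha'K hc
  · refine hom_ext ?_ ?_
    · ext h
      simp only [MonoidHom.coe_comp, Function.comp_apply, lift_of, MonoidHom.id_apply]
    · simp only [MonoidHom.comp_apply, lift_t, MonoidHom.id_apply, map_mul, map_inv, lift_of]
      exact W4 ha'K hc
  · intro h
    simp only [MonoidHom.toMulEquiv_apply, lift_of]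
  · simp only [MonoidHom.toMulEquiv_apply, lift_t]
    norm_cast
  · intro h
    simp only [MonoidHom.toMulEquiv_symm_apply, lift_of]
  · simp only [MonoidHom.toMulEquiv_symm_apply, lift_t]
    norm_cast
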